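/- The exterior product on discrete differential forms is super-anticommutative: for a p-form f and a q-form g on a finite simple graph, f ∧ g = (−1)^{pq} g ∧ f. -/

import Mathlib

variable {V : Type*}

/-- A tuple of vertices spans a clique: distinct entries are pairwise adjacent. -/
def IsCliqueTuple (G : SimpleGraph V) {m : ℕ} (x : Fin m → V) : Prop :=
  Function.Injective x ∧ ∀ i j, i ≠ j → G.Adj (x i) (x j)

/-- `(p,q)`-shuffles: permutations of `Fin (p+q)` that are increasing on the first `p`
and on the last `q` positions. -/
noncomputable def shuffles (p q : ℕ) : Finset (Equiv.Perm (Fin (p + q))) :=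
  @Finset.filter _ (fun σ =>
      (∀ i j : Fin (p + q), i < j → (i : ℕ) < p → (j : ℕ) < p → σ i < σ j) ∧
      (∀ i j : Fin (p + q), i < j → p ≤ (i : ℕ) → p ≤ (j : ℕ) → σ i < σ j))
    (Classical.decPred _) Finset.univ

/-- The pre-exterior product `f ∧' g` of a `p`-form and a `q`-form, centered at `x 0`. -/
noncomputable def preWedge {p q : ℕ} (f : (Fin (p + 1) → V) → ℝ) (g : (Fin (q + 1) → V) → ℝ)
    (x : Fin (p + q + 1) → V) : ℝ :=
  ∑ σ ∈ shuffles p q,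
    ((Equiv.Perm.sign σ : ℤ) : ℝ) *
      f (Fin.cons (x 0) (fun i : Fin p => x (σ (Fin.castAdd q i)).succ)) *
      g (Fin.cons (x 0) (fun j : Fin q => x (σ (Fin.natAdd p j)).succ))

/-- The exterior product `f ∧ g`: the antisymmetrization of `f ∧' g`, averaging over all
cyclic rotations of the `p+q+1` arguments with signs. -/
noncomputable def wedge {p q : ℕ} (f : (Fin (p + 1) → V) → ℝ) (g : (Fin (q + 1) → V) → ℝ)
    (x : Fin (p + q + 1) → V) : ℝ :=
  (1 / (p + q + 1 : ℝ)) *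
    ∑ m ∈ Finset.range (p + q + 1),
      ((Equiv.Perm.sign ((finRotate (p + q + 1)) ^ m) : ℤ) : ℝ) *
        preWedge f g (x ∘ ((finRotate (p + q + 1)) ^ m))

/- ### Auxiliary lemmas -/

lemma finRotate_pow_val (n m : ℕ) (k : Fin (n+1)) :
    (((finRotate (n+1))^m) k).val = (k.val + m) % (n+1) := by
  induction m generalizing k with
  | zero => simp [Nat.mod_eq_of_lt k.isLt]
  | succ m ih =>
    rw [pow_succ, Equiv.Perm.mul_apply, finRotate_succ_apply, ih, Fin.val_add,
      Fin.val_one']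
    rw [Nat.mod_add_mod, show (k:ℕ) + 1 % (n+1) + m = (k:ℕ) + m + 1 % (n+1) from by ring,
      Nat.add_mod_mod]
    congr 1

lemma flip_val (p q : ℕ) (k : Fin (q+p)) :
    ((finAddFlip k : Fin (p+q))).val = if k.val < q then p + k.val else k.val - q := by
  rcases k with ⟨k, hk⟩
  by_cases h : k < q
  · rw [if_pos h, finAddFlip_apply_mk_left h]
  · rw [if_neg h, finAddFlip_apply_mk_right (le_of_not_gt h)]

/-- The block-swap permutation of `Fin (q+p)`. -/
def blockFlip (p q : ℕ) : Equiv.Perm (Fin (q+p)) :=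
  finAddFlip.trans (finCongr (Nat.add_comm p q))

lemma blockFlip_val (p q : ℕ) (k : Fin (q+p)) :
    (blockFlip p q k).val = (k.val + p) % (q+p) := by
  have : (blockFlip p q k).val = ((finAddFlip k : Fin (p+q))).val := rfl
  rw [this, flip_val]
  split_ifs with h
  · rw [Nat.mod_eq_of_lt (by omega)]; omega
  · rw [show k.val + p = (q+p) + (k.val - q) from by omega, Nat.add_mod_left,
      Nat.mod_eq_of_lt (by omega)]

lemma sign_blockFlip (p q : ℕ) :
    Equiv.Perm.sign (blockFlip p q) = (-1)^(p*q) := by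
  cases p with
  | zero =>
    have h : blockFlip 0 q = 1 := by
      apply Equiv.ext; intro k
      apply Fin.ext
      rw [blockFlip_val]
      show (k.val + 0) % (q + 0) = k.val
      rw [Nat.add_zero]
      exact Nat.mod_eq_of_lt k.isLt
    rw [h]; simp
  | succ p' =>
    have h : blockFlip (p'+1) q = (finRotate (q+p'+1))^(p'+1) := by
      apply Equiv.ext
      intro k
      apply Fin.ext
      rw [blockFlip_val]
      exact (finRotate_pow_val (q+p') (p'+1) k).symm
    rw [h, map_pow]
    show (Equiv.Perm.sign (finRotate ((q+p')+1))) ^ (p'+1) = (-1) ^ ((p'+1) * q)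
    rw [sign_finRotate, Nat.add_sub_cancel, ← pow_mul,
      show (q+p')*(p'+1) = (p'+1)*q + p'*(p'+1) from by ring, pow_add,
      (Nat.even_mul_succ_self p').neg_one_pow, mul_one]

/-- Transport of a permutation through the block swap. -/
def shMap (p q : ℕ) (σ : Equiv.Perm (Fin (p+q))) : Equiv.Perm (Fin (q+p)) :=
  finAddFlip.trans (σ.trans (finCongr (Nat.add_comm p q)))

lemma shMap_apply (p q : ℕ) (σ : Equiv.Perm (Fin (p+q))) (k : Fin (q+p)) :
    shMap p q σ k = Fin.cast (Nat.add_comm p q) (σ (finAddFlip k)) := rfl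

lemma shMap_eq (p q : ℕ) (σ : Equiv.Perm (Fin (p+q))) :
    shMap p q σ = ((finCongr (Nat.add_comm p q)).permCongr σ) * blockFlip p q := by
  ext k
  simp [shMap, blockFlip, Equiv.permCongr_apply, Equiv.Perm.mul_apply]

lemma sign_shMap (p q : ℕ) (σ : Equiv.Perm (Fin (p+q))) :
    Equiv.Perm.sign (shMap p q σ) = Equiv.Perm.sign σ * (-1)^(p*q) := by
  rw [shMap_eq, map_mul, Equiv.Perm.sign_permCongr, sign_blockFlip]

lemma mem_shuffles (p q : ℕ) (σ : Equiv.Perm (Fin (p+q))) :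
    σ ∈ shuffles p q ↔ shMap p q σ ∈ shuffles q p := by
  simp only [shuffles, Finset.mem_filter, Finset.mem_univ, true_and]
  have hval : ∀ k : Fin (q+p), ((shMap p q σ k) : ℕ) = ((σ (finAddFlip k)) : ℕ) :=
    fun k => rfl
  constructor
  · rintro ⟨h1, h2⟩
    constructor
    · intro i j hij hi hj
      rw [Fin.lt_def, hval, hval]
      rw [Fin.lt_def] at hij
      have hfi := flip_val p q i; rw [if_pos hi] at hfi
      have hfj := flip_val p q j; rw [if_pos hj] at hfj
      exact h2 (finAddFlip i) (finAddFlip j)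
        (by rw [Fin.lt_def, hfi, hfj]; omega) (by omega) (by omega)
    · intro i j hij hi hj
      rw [Fin.lt_def, hval, hval]
      rw [Fin.lt_def] at hij
      have hfi := flip_val p q i; rw [if_neg (by omega)] at hfi
      have hfj := flip_val p q j; rw [if_neg (by omega)] at hfj
      have hi' : i.val < q + p := i.isLt
      have hj' : j.val < q + p := j.isLt
      exact h1 (finAddFlip i) (finAddFlip j)
        (by rw [Fin.lt_def, hfi, hfj]; omega) (by omega) (by omega)
  · rintro ⟨hA, hB⟩
    constructor
    · intro i' j' hij hi hj
      rw [Fin.lt_def] at hij ⊢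
      have hi'lt : i'.val < p + q := i'.isLt
      have hj'lt : j'.val < p + q := j'.isLt
      set i : Fin (q+p) := ⟨q + i'.val, by omega⟩ with hidef
      set j : Fin (q+p) := ⟨q + j'.val, by omega⟩ with hjdef
      have hfi : finAddFlip i = i' := by
        apply Fin.ext; rw [flip_val]; rw [if_neg (by simp [hidef])]
        simp [hidef]
      have hfj : finAddFlip j = j' := by
        apply Fin.ext; rw [flip_val]; rw [if_neg (by simp [hjdef])]
        simp [hjdef]
      have := hB i j (by rw [Fin.lt_def]; simp [hidef, hjdef]; omega)
        (by simp [hidef]) (by simp [hjdef])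
      rw [Fin.lt_def, hval, hval, hfi, hfj] at this
      exact this
    · intro i' j' hij hi hj
      rw [Fin.lt_def] at hij ⊢
      have hi'lt : i'.val < p + q := i'.isLt
      have hj'lt : j'.val < p + q := j'.isLt
      set i : Fin (q+p) := ⟨i'.val - p, by omega⟩ with hidef
      set j : Fin (q+p) := ⟨j'.val - p, by omega⟩ with hjdef
      have hfi : finAddFlip i = i' := by
        apply Fin.ext; rw [flip_val]; rw [if_pos (by simp [hidef]; omega)]
        simp [hidef]; omega
      have hfj : finAddFlip j = j' := by
        apply Fin.ext; rw [flip_val]; rw [if_pos (by simp [hjdef]; omega)]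
        simp [hjdef]; omega
      have := hA i j (by rw [Fin.lt_def]; simp [hidef, hjdef]; omega)
        (by simp [hidef]; omega) (by simp [hjdef]; omega)
      rw [Fin.lt_def, hval, hval, hfi, hfj] at this
      exact this

/-- The equivalence on permutations corresponding to `shMap`. -/
noncomputable def shEquiv (p q : ℕ) :
    Equiv.Perm (Fin (p+q)) ≃ Equiv.Perm (Fin (q+p)) :=
  ((finCongr (Nat.add_comm p q)).permCongr).trans (Equiv.mulRight (blockFlip p q))

lemma shEquiv_apply (p q : ℕ) (σ : Equiv.Perm (Fin (p+q))) :
    shEquiv p q σ = shMap p q σ := by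
  rw [shMap_eq]; rfl

lemma preWedge_comm (p q : ℕ) (f : (Fin (p + 1) → V) → ℝ) (g : (Fin (q + 1) → V) → ℝ)
    (x : Fin (p + q + 1) → V) (h : q + p + 1 = p + q + 1) :
    preWedge f g x
      = (-1:ℝ)^(p*q) * preWedge g f (fun i : Fin (q+p+1) => x (Fin.cast h i)) := by
  rw [preWedge, preWedge, Finset.mul_sum]
  refine Finset.sum_equiv (shEquiv p q) (fun σ => ?_) (fun σ hσ => ?_)
  · rw [shEquiv_apply]; exact mem_shuffles p q σ
  · have e0 : x (Fin.cast h 0) = x 0 := by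
      apply congrArg; apply Fin.ext; simp
    have e1 : (fun j : Fin q => x (Fin.cast h ((shEquiv p q σ (Fin.castAdd p j)).succ)))
        = (fun j : Fin q => x ((σ (Fin.natAdd p j)).succ)) := by
      funext j
      apply congrArg; apply Fin.ext
      rw [shEquiv_apply, shMap_apply, finAddFlip_apply_castAdd]
      simp
    have e2 : (fun i : Fin p => x (Fin.cast h ((shEquiv p q σ (Fin.natAdd q i)).succ)))
        = (fun i : Fin p => x ((σ (Fin.castAdd q i)).succ)) := by
      funext i
      apply congrArg; apply Fin.ext
      rw [shEquiv_apply, shMap_apply, finAddFlip_apply_natAdd]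
      simp
    rw [e0, e1, e2, shEquiv_apply, sign_shMap]
    have hS : (((Equiv.Perm.sign σ * (-1)^(p*q) : ℤˣ) : ℤ) : ℝ)
        = ((Equiv.Perm.sign σ : ℤ) : ℝ) * (-1:ℝ)^(p*q) := by
      push_cast
      ring
    rw [hS]
    have hsq : (-1:ℝ)^(p*q) * (-1:ℝ)^(p*q) = 1 := by
      rw [← pow_add, ← two_mul, pow_mul]; norm_num
    set s := ((Equiv.Perm.sign σ : ℤ) : ℝ)
    set a := f (Fin.cons (x 0) (fun i : Fin p => x ((σ (Fin.castAdd q i)).succ)))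
    set b := g (Fin.cons (x 0) (fun j : Fin q => x ((σ (Fin.natAdd p j)).succ)))
    set c := (-1:ℝ)^(p*q)
    linear_combination (-(s * a * b)) * hsq

lemma pow_cast_comm {a b : ℕ} (h : a + 1 = b + 1) (m : ℕ) (k : Fin (a+1)) :
    (⇑(finRotate (b+1)) ^ m) (Fin.cast h k) = Fin.cast h ((⇑(finRotate (a+1)) ^ m) k) := by
  have h' : a = b := by omega
  subst h'; rfl

lemma sign_rot_congr {a b : ℕ} (h : a = b) (m : ℕ) :
    Equiv.Perm.sign ((finRotate a)^m) = Equiv.Perm.sign ((finRotate b)^m) := by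
  subst h; rfl

theorem wedge_comm (G : SimpleGraph V) {p q : ℕ}
    (f : (Fin (p + 1) → V) → ℝ) (g : (Fin (q + 1) → V) → ℝ)
    (hf_alt : ∀ (σ : Equiv.Perm (Fin (p + 1))) (x : Fin (p + 1) → V),
      f (x ∘ σ) = ((Equiv.Perm.sign σ : ℤ) : ℝ) * f x)
    (hf_supp : ∀ x, ¬ IsCliqueTuple G x → f x = 0)
    (hg_alt : ∀ (σ : Equiv.Perm (Fin (q + 1))) (x : Fin (q + 1) → V),
      g (x ∘ σ) = ((Equiv.Perm.sign σ : ℤ) : ℝ) * g x)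
    (hg_supp : ∀ x, ¬ IsCliqueTuple G x → g x = 0)
    (x : Fin (p + q + 1) → V) :
    wedge f g x = (-1 : ℝ) ^ (p * q) * wedge g f (fun i : Fin (q + p + 1) => x (Fin.cast (by omega) i)) := by
  have h1 : q + p + 1 = p + q + 1 := by omega
  show wedge f g x
    = (-1:ℝ)^(p*q) * wedge g f (fun i : Fin (q+p+1) => x (Fin.cast h1 i))
  rw [wedge, wedge]
  rw [show Finset.range (q+p+1) = Finset.range (p+q+1) from by rw [h1]]
  have key : ∀ m ∈ Finset.range (p+q+1),
      ((Equiv.Perm.sign ((finRotate (p+q+1))^m) : ℤ) : ℝ)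
          * preWedge f g (x ∘ (⇑(finRotate (p+q+1)) ^ m))
        = (-1:ℝ)^(p*q) * (((Equiv.Perm.sign ((finRotate (q+p+1))^m) : ℤ) : ℝ) *
            preWedge g f ((fun i : Fin (q+p+1) => x (Fin.cast h1 i))
              ∘ (⇑(finRotate (q+p+1)) ^ m))) := by
    intro m _
    have harg : (fun i : Fin (q+p+1) =>
          (x ∘ (⇑(finRotate (p+q+1)) ^ m)) (Fin.cast h1 i))
        = ((fun i : Fin (q+p+1) => x (Fin.cast h1 i)) ∘ (⇑(finRotate (q+p+1)) ^ m)) := by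
      funext k
      show x ((⇑(finRotate (p+q+1)) ^ m) (Fin.cast h1 k))
        = x (Fin.cast h1 ((⇑(finRotate (q+p+1)) ^ m) k))
      exact congrArg x (pow_cast_comm h1 m k)
    rw [preWedge_comm p q f g (x ∘ (⇑(finRotate (p+q+1)) ^ m)) h1, harg,
      sign_rot_congr h1.symm m]
    ring
  rw [Finset.sum_congr rfl key]
  rw [← Finset.mul_sum]
  rw [show ((q:ℝ) + p + 1) = ((p:ℝ) + q + 1) from by ring]
  ring
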